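/- In classical propositional logic, every formula A is par-projective: there exist a variable-free formula E and a substitution θ fixing parameters such that ⊢ θ(A) ↔ E and A ⊢ θ(x) ↔ x for all variables x. Moreover U(A) → A is projective, where U(A) is the uniform post-interpolant of A w.r.t. the parameters. -/

import Mathlib

inductive Form (var par : Type) : Type where
  | bot : Form var par
  | v : var → Form var par
  | p : par → Form var par
  | and : Form var par → Form var par → Form var par
  | or : Form var par → Form var par → Form var par
  | imp : Form var par → Form var par → Form var par

namespace Form
variable {var par : Type}

def neg (A : Form var par) : Form var par := A.imp .bot
def top : Form var par := Form.neg .bot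
def fiff (A B : Form var par) : Form var par := (A.imp B).and (B.imp A)

/-- `varFree A`: `A` contains no variables (it lies in the parameter-only sublanguage). -/
def varFree : Form var par → Prop
  | .bot => True
  | .v _ => False
  | .p _ => True
  | .and A B => varFree A ∧ varFree B
  | .or A B => varFree A ∧ varFree B
  | .imp A B => varFree A ∧ varFree B

/-- Substitutions act on variables, fix parameters, and commute with connectives. -/
def subst (θ : var → Form var par) : Form var par → Form var par
  | .bot => .bot
  | .v x => θ x
  | .p q => .p q
  | .and A B => (subst θ A).and (subst θ B)
  | .or A B => (subst θ A).or (subst θ B)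
  | .imp A B => (subst θ A).imp (subst θ B)

end Form

/-- Hilbert-style provability: `cl = false` is intuitionistic logic (IPC),
`cl = true` is classical logic (CPC). -/
inductive Prv {var par : Type} (cl : Bool) : Form var par → Prop where
  | mp {A B : Form var par} : Prv cl (A.imp B) → Prv cl A → Prv cl B
  | k {A B : Form var par} : Prv cl (A.imp (B.imp A))
  | s {A B C : Form var par} :
      Prv cl ((A.imp (B.imp C)).imp ((A.imp B).imp (A.imp C)))
  | andI {A B : Form var par} : Prv cl (A.imp (B.imp (A.and B)))
  | andE1 {A B : Form var par} : Prv cl ((A.and B).imp A)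
  | andE2 {A B : Form var par} : Prv cl ((A.and B).imp B)
  | orI1 {A B : Form var par} : Prv cl (A.imp (A.or B))
  | orI2 {A B : Form var par} : Prv cl (B.imp (A.or B))
  | orE {A B C : Form var par} :
      Prv cl ((A.imp C).imp ((B.imp C).imp ((A.or B).imp C)))
  | exf {A : Form var par} : Prv cl (Form.bot.imp A)
  | dne {A : Form var par} : cl = true → Prv cl (A.neg.neg.imp A)

/-- `U` is the uniform post-interpolant of `A` with respect to the parameters. -/
def IsUPI {var par : Type} (cl : Bool) (A U : Form var par) : Prop :=
  U.varFree ∧ Prv cl (A.imp U) ∧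
    ∀ C : Form var par, C.varFree → Prv cl (A.imp C) → Prv cl (U.imp C)

namespace PLaux
open Form

variable {var par : Type}

/-- Derivation from a list of hypotheses, via iterated implications. -/
def Ctx : List (Form var par) → Form var par → Prop
  | [], A => Prv true A
  | B :: Γ, A => Ctx Γ (B.imp A)

theorem Ctx.ofPrv {Γ : List (Form var par)} : ∀ {A : Form var par},
    Prv true A → Ctx Γ A := by
  induction Γ with
  | nil => exact fun h => h
  | cons B Γ ih =>
      intro A h
      show Ctx Γ (B.imp A)
      exact ih (Prv.mp Prv.k h)

theorem Ctx.mp {Γ : List (Form var par)} : ∀ {A B : Form var par},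
    Ctx Γ (A.imp B) → Ctx Γ A → Ctx Γ B := by
  induction Γ with
  | nil => exact fun h1 h2 => Prv.mp h1 h2
  | cons C Γ ih =>
      intro A B h1 h2
      show Ctx Γ (C.imp B)
      exact ih (ih (Ctx.ofPrv Prv.s) (h1 : Ctx Γ (C.imp (A.imp B)))) h2

theorem prv_id {A : Form var par} : Prv true (A.imp A) :=
  Prv.mp (Prv.mp (Prv.s (B := A.imp A)) Prv.k) Prv.k

theorem Ctx.hyp0 {Γ : List (Form var par)} {A : Form var par} : Ctx (A :: Γ) A :=
  show Ctx Γ (A.imp A) from Ctx.ofPrv prv_id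

theorem Ctx.weak {Γ : List (Form var par)} {A B : Form var par}
    (h : Ctx Γ A) : Ctx (B :: Γ) A :=
  show Ctx Γ (B.imp A) from Ctx.mp (Ctx.ofPrv Prv.k) h

theorem Ctx.hyp : ∀ {Γ : List (Form var par)} {A : Form var par}, A ∈ Γ → Ctx Γ A
  | _ :: _, _, h => by
    rcases List.mem_cons.1 h with h | h
    · subst h; exact Ctx.hyp0
    · exact (Ctx.hyp h).weak

theorem Ctx.intro {Γ : List (Form var par)} {A B : Form var par}
    (h : Ctx (A :: Γ) B) : Ctx Γ (A.imp B) := h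

theorem Ctx.elim {Γ : List (Form var par)} {A B : Form var par}
    (h : Ctx Γ (A.imp B)) : Ctx (A :: Γ) B := h

theorem Ctx.andI {Γ : List (Form var par)} {A B : Form var par}
    (h1 : Ctx Γ A) (h2 : Ctx Γ B) : Ctx Γ (A.and B) :=
  ((Ctx.ofPrv Prv.andI).mp h1).mp h2

theorem Ctx.andE1 {Γ : List (Form var par)} {A B : Form var par}
    (h : Ctx Γ (A.and B)) : Ctx Γ A := (Ctx.ofPrv Prv.andE1).mp h

theorem Ctx.andE2 {Γ : List (Form var par)} {A B : Form var par}
    (h : Ctx Γ (A.and B)) : Ctx Γ B := (Ctx.ofPrv Prv.andE2).mp h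

theorem Ctx.orI1 {Γ : List (Form var par)} {A B : Form var par}
    (h : Ctx Γ A) : Ctx Γ (A.or B) := (Ctx.ofPrv Prv.orI1).mp h

theorem Ctx.orI2 {Γ : List (Form var par)} {A B : Form var par}
    (h : Ctx Γ B) : Ctx Γ (A.or B) := (Ctx.ofPrv Prv.orI2).mp h

theorem Ctx.orE {Γ : List (Form var par)} {A B C : Form var par}
    (h : Ctx Γ (A.or B)) (h1 : Ctx (A :: Γ) C) (h2 : Ctx (B :: Γ) C) : Ctx Γ C :=
  (((Ctx.ofPrv Prv.orE).mp (Ctx.intro h1)).mp (Ctx.intro h2)).mp h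

theorem Ctx.exf {Γ : List (Form var par)} {A : Form var par}
    (h : Ctx Γ Form.bot) : Ctx Γ A := (Ctx.ofPrv Prv.exf).mp h

theorem Ctx.negE {Γ : List (Form var par)} {A B : Form var par}
    (h1 : Ctx Γ A.neg) (h2 : Ctx Γ A) : Ctx Γ B :=
  Ctx.exf (Ctx.mp (A := A) h1 h2)

theorem Ctx.byContra {Γ : List (Form var par)} {A : Form var par}
    (h : Ctx (A.neg :: Γ) Form.bot) : Ctx Γ A :=
  (Ctx.ofPrv (Prv.dne rfl)).mp (Ctx.intro h)

theorem Ctx.cases {Γ : List (Form var par)} {A C : Form var par}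
    (h1 : Ctx (A :: Γ) C) (h2 : Ctx (A.neg :: Γ) C) : Ctx Γ C := by
  apply Ctx.byContra
  have w1 : Ctx (C.neg :: Γ) (A.imp C) := (Ctx.intro h1).weak
  have w2 : Ctx (C.neg :: Γ) (A.neg.imp C) := (Ctx.intro h2).weak
  have hnA : Ctx (C.neg :: Γ) A.neg := by
    apply Ctx.intro (A := A) (B := Form.bot)
    exact Ctx.mp (A := C) (Ctx.hyp (A := C.neg) (by simp)) (Ctx.mp w1.weak Ctx.hyp0)
  exact Ctx.mp (A := C) Ctx.hyp0 (w2.mp hnA)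

/-! iff toolkit -/

theorem Ctx.iffI {Γ : List (Form var par)} {A B : Form var par}
    (h1 : Ctx Γ (A.imp B)) (h2 : Ctx Γ (B.imp A)) : Ctx Γ (A.fiff B) :=
  Ctx.andI h1 h2

theorem Ctx.iff1 {Γ : List (Form var par)} {A B : Form var par}
    (h : Ctx Γ (A.fiff B)) : Ctx Γ (A.imp B) := Ctx.andE1 h

theorem Ctx.iff2 {Γ : List (Form var par)} {A B : Form var par}
    (h : Ctx Γ (A.fiff B)) : Ctx Γ (B.imp A) := Ctx.andE2 h

theorem Ctx.iffMp {Γ : List (Form var par)} {A B : Form var par}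
    (h : Ctx Γ (A.fiff B)) (ha : Ctx Γ A) : Ctx Γ B := (Ctx.iff1 h).mp ha

theorem Ctx.iffMpr {Γ : List (Form var par)} {A B : Form var par}
    (h : Ctx Γ (A.fiff B)) (hb : Ctx Γ B) : Ctx Γ A := (Ctx.iff2 h).mp hb

theorem Ctx.iffRefl {Γ : List (Form var par)} {A : Form var par} : Ctx Γ (A.fiff A) :=
  Ctx.iffI (Ctx.ofPrv prv_id) (Ctx.ofPrv prv_id)

theorem Ctx.iffSymm {Γ : List (Form var par)} {A B : Form var par}
    (h : Ctx Γ (A.fiff B)) : Ctx Γ (B.fiff A) := Ctx.iffI (Ctx.iff2 h) (Ctx.iff1 h)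

theorem Ctx.iffTrans {Γ : List (Form var par)} {A B C : Form var par}
    (h1 : Ctx Γ (A.fiff B)) (h2 : Ctx Γ (B.fiff C)) : Ctx Γ (A.fiff C) := by
  apply Ctx.iffI
  · apply Ctx.intro
    exact Ctx.iffMp h2.weak (Ctx.iffMp h1.weak Ctx.hyp0)
  · apply Ctx.intro
    exact Ctx.iffMpr h1.weak (Ctx.iffMpr h2.weak Ctx.hyp0)

theorem Ctx.andCongr {Γ : List (Form var par)} {A A' B B' : Form var par}
    (h1 : Ctx Γ (A.fiff A')) (h2 : Ctx Γ (B.fiff B')) :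
    Ctx Γ ((A.and B).fiff (A'.and B')) := by
  apply Ctx.iffI <;> apply Ctx.intro
  · exact Ctx.andI (Ctx.iffMp h1.weak (Ctx.andE1 Ctx.hyp0))
      (Ctx.iffMp h2.weak (Ctx.andE2 Ctx.hyp0))
  · exact Ctx.andI (Ctx.iffMpr h1.weak (Ctx.andE1 Ctx.hyp0))
      (Ctx.iffMpr h2.weak (Ctx.andE2 Ctx.hyp0))

theorem Ctx.orCongr {Γ : List (Form var par)} {A A' B B' : Form var par}
    (h1 : Ctx Γ (A.fiff A')) (h2 : Ctx Γ (B.fiff B')) :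
    Ctx Γ ((A.or B).fiff (A'.or B')) := by
  apply Ctx.iffI <;> apply Ctx.intro
  · refine Ctx.orE Ctx.hyp0 ?_ ?_
    · exact Ctx.orI1 (Ctx.iffMp h1.weak.weak Ctx.hyp0)
    · exact Ctx.orI2 (Ctx.iffMp h2.weak.weak Ctx.hyp0)
  · refine Ctx.orE Ctx.hyp0 ?_ ?_
    · exact Ctx.orI1 (Ctx.iffMpr h1.weak.weak Ctx.hyp0)
    · exact Ctx.orI2 (Ctx.iffMpr h2.weak.weak Ctx.hyp0)

theorem Ctx.impCongr {Γ : List (Form var par)} {A A' B B' : Form var par}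
    (h1 : Ctx Γ (A.fiff A')) (h2 : Ctx Γ (B.fiff B')) :
    Ctx Γ ((A.imp B).fiff (A'.imp B')) := by
  apply Ctx.iffI <;> apply Ctx.intro <;> apply Ctx.intro
  · refine Ctx.iffMp h2.weak.weak ?_
    exact Ctx.mp (Ctx.hyp (by simp)) (Ctx.iffMpr h1.weak.weak Ctx.hyp0)
  · refine Ctx.iffMpr h2.weak.weak ?_
    exact Ctx.mp (Ctx.hyp (by simp)) (Ctx.iffMp h1.weak.weak Ctx.hyp0)

/-! Substitution lemmas -/

theorem Prv.substPrv {cl : Bool} (θ : var → Form var par) {A : Form var par}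
    (h : Prv cl A) : Prv cl (Form.subst θ A) := by
  induction h with
  | mp _ _ ih1 ih2 => exact ih1.mp ih2
  | k => exact Prv.k
  | s => exact Prv.s
  | andI => exact Prv.andI
  | andE1 => exact Prv.andE1
  | andE2 => exact Prv.andE2
  | orI1 => exact Prv.orI1
  | orI2 => exact Prv.orI2
  | orE => exact Prv.orE
  | exf => exact Prv.exf
  | dne hcl => exact Prv.dne hcl

theorem subst_id : ∀ A : Form var par, Form.subst Form.v A = A
  | .bot => rfl
  | .v _ => rfl
  | .p _ => rfl
  | .and A B => by rw [Form.subst, subst_id A, subst_id B]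
  | .or A B => by rw [Form.subst, subst_id A, subst_id B]
  | .imp A B => by rw [Form.subst, subst_id A, subst_id B]

theorem subst_subst (σ τ : var → Form var par) :
    ∀ A : Form var par, Form.subst σ (Form.subst τ A) =
      Form.subst (fun y => Form.subst σ (τ y)) A
  | .bot => rfl
  | .v _ => rfl
  | .p _ => rfl
  | .and A B => by rw [Form.subst, Form.subst, Form.subst, subst_subst σ τ A, subst_subst σ τ B]
  | .or A B => by rw [Form.subst, Form.subst, Form.subst, subst_subst σ τ A, subst_subst σ τ B]
  | .imp A B => by rw [Form.subst, Form.subst, Form.subst, subst_subst σ τ A, subst_subst σ τ B]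

theorem subst_varFree (θ : var → Form var par) :
    ∀ {A : Form var par}, A.varFree → Form.subst θ A = A
  | .bot, _ => rfl
  | .p _, _ => rfl
  | .and A B, h => by
      rw [Form.subst, subst_varFree θ h.1, subst_varFree θ h.2]
  | .or A B, h => by
      rw [Form.subst, subst_varFree θ h.1, subst_varFree θ h.2]
  | .imp A B, h => by
      rw [Form.subst, subst_varFree θ h.1, subst_varFree θ h.2]

/-- The list of variables occurring in a formula. -/
def fvars : Form var par → List var
  | .bot => []
  | .v x => [x]
  | .p _ => []
  | .and A B => fvars A ++ fvars B
  | .or A B => fvars A ++ fvars B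
  | .imp A B => fvars A ++ fvars B

theorem varFree_of_fvars_nil : ∀ {A : Form var par}, fvars A = [] → A.varFree
  | .bot, _ => trivial
  | .p _, _ => trivial
  | .v _, h => by simp [fvars] at h
  | .and A B, h => by
      rw [fvars, List.append_eq_nil_iff] at h
      exact ⟨varFree_of_fvars_nil h.1, varFree_of_fvars_nil h.2⟩
  | .or A B, h => by
      rw [fvars, List.append_eq_nil_iff] at h
      exact ⟨varFree_of_fvars_nil h.1, varFree_of_fvars_nil h.2⟩
  | .imp A B, h => by
      rw [fvars, List.append_eq_nil_iff] at h
      exact ⟨varFree_of_fvars_nil h.1, varFree_of_fvars_nil h.2⟩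

theorem mem_fvars_subst (θ : var → Form var par) :
    ∀ {A : Form var par} {y : var}, y ∈ fvars (Form.subst θ A) →
      ∃ z ∈ fvars A, y ∈ fvars (θ z)
  | .v x, y, h => ⟨x, by simp [fvars], h⟩
  | .and A B, y, h => by
      rw [Form.subst, fvars, List.mem_append] at h
      rcases h with h | h
      · obtain ⟨z, hz, hy⟩ := mem_fvars_subst θ h
        exact ⟨z, by simp [fvars, hz], hy⟩
      · obtain ⟨z, hz, hy⟩ := mem_fvars_subst θ h
        exact ⟨z, by simp [fvars, hz], hy⟩
  | .or A B, y, h => by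
      rw [Form.subst, fvars, List.mem_append] at h
      rcases h with h | h
      · obtain ⟨z, hz, hy⟩ := mem_fvars_subst θ h
        exact ⟨z, by simp [fvars, hz], hy⟩
      · obtain ⟨z, hz, hy⟩ := mem_fvars_subst θ h
        exact ⟨z, by simp [fvars, hz], hy⟩
  | .imp A B, y, h => by
      rw [Form.subst, fvars, List.mem_append] at h
      rcases h with h | h
      · obtain ⟨z, hz, hy⟩ := mem_fvars_subst θ h
        exact ⟨z, by simp [fvars, hz], hy⟩
      · obtain ⟨z, hz, hy⟩ := mem_fvars_subst θ h
        exact ⟨z, by simp [fvars, hz], hy⟩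

open Classical in
/-- Substitute `t` for the single variable `x`. -/
noncomputable def sub1 (x : var) (t : Form var par) : var → Form var par :=
  fun y => if y = x then t else .v y

theorem sub1_same (x : var) (t : Form var par) : sub1 x t x = t := by simp [sub1]

theorem sub1_other {x y : var} (t : Form var par) (h : y ≠ x) : sub1 x t y = .v y := by
  simp [sub1, h]

/-- If the substitution fixes every variable over `Γ`, it fixes every formula over `Γ`. -/
theorem fix_subst {Γ : List (Form var par)} (θ : var → Form var par)
    (h : ∀ x, Ctx Γ ((θ x).fiff (.v x))) :
    ∀ C : Form var par, Ctx Γ ((Form.subst θ C).fiff C)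
  | .bot => Ctx.iffRefl
  | .v x => h x
  | .p _ => Ctx.iffRefl
  | .and A B => Ctx.andCongr (fix_subst θ h A) (fix_subst θ h B)
  | .or A B => Ctx.orCongr (fix_subst θ h A) (fix_subst θ h B)
  | .imp A B => Ctx.impCongr (fix_subst θ h A) (fix_subst θ h B)

/-- Replacement: substituting provably-equivalent formulas for `x` gives equivalent results. -/
theorem repl2 {Γ : List (Form var par)} {x : var} {s s' : Form var par}
    (h : Ctx Γ (s.fiff s')) :
    ∀ C : Form var par, Ctx Γ ((Form.subst (sub1 x s) C).fiff (Form.subst (sub1 x s') C))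
  | .bot => Ctx.iffRefl
  | .v y => by
      by_cases hy : y = x
      · subst hy
        show Ctx Γ ((sub1 y s y).fiff (sub1 y s' y))
        rw [sub1_same, sub1_same]; exact h
      · show Ctx Γ ((sub1 x s y).fiff (sub1 x s' y))
        rw [sub1_other s hy, sub1_other s' hy]; exact Ctx.iffRefl
  | .p _ => Ctx.iffRefl
  | .and A B => Ctx.andCongr (repl2 h A) (repl2 h B)
  | .or A B => Ctx.orCongr (repl2 h A) (repl2 h B)
  | .imp A B => Ctx.impCongr (repl2 h A) (repl2 h B)

theorem repl1 {Γ : List (Form var par)} {x : var} {s : Form var par}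
    (h : Ctx Γ (s.fiff (.v x))) (C : Form var par) :
    Ctx Γ ((Form.subst (sub1 x s) C).fiff C) := by
  have := repl2 (x := x) h C
  rw [show Form.subst (sub1 x (.v x)) C = C from ?_] at this
  · exact this
  · have : sub1 x (Form.v x) = Form.v (par := par) := by
      funext y; by_cases hy : y = x
      · subst hy; rw [sub1_same]
      · rw [sub1_other _ hy]
    rw [this, subst_id]

theorem top_iff {Γ : List (Form var par)} {x : var} (h : Ctx Γ (.v x)) :
    Ctx Γ ((Form.top (var := var) (par := par)).fiff (.v x)) := by
  apply Ctx.iffI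
  · exact Ctx.intro (h.weak)
  · exact Ctx.intro (Ctx.ofPrv prv_id).weak

theorem bot_iff {Γ : List (Form var par)} {x : var} (h : Ctx Γ (Form.v x).neg) :
    Ctx Γ ((Form.bot (var := var) (par := par)).fiff (.v x)) := by
  apply Ctx.iffI
  · exact Ctx.ofPrv Prv.exf
  · exact h

theorem Ctx.iffTop {Γ : List (Form var par)} {C : Form var par}
    (h : Ctx Γ C) : Ctx Γ (C.fiff .top) :=
  Ctx.iffI (Ctx.intro (Ctx.ofPrv prv_id).weak) (Ctx.intro h.weak)

theorem Ctx.iffBot {Γ : List (Form var par)} {C : Form var par}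
    (h : Ctx Γ C.neg) : Ctx Γ (C.fiff .bot) :=
  Ctx.iffI h (Ctx.ofPrv Prv.exf)

theorem notimp {Γ : List (Form var par)} {P Q : Form var par}
    (h : Ctx Γ ((P.imp Q).neg)) : Ctx Γ P := by
  apply Ctx.byContra
  refine Ctx.negE (B := .bot) h.weak (Ctx.intro ?_)
  exact Ctx.exf (Ctx.mp (A := P) (Ctx.hyp (A := P.neg) (by simp)) Ctx.hyp0)

theorem fact_c (B : Form var par) (x : var) :
    Ctx [B] ((Form.subst (sub1 x .top) B).or (Form.subst (sub1 x .bot) B)) := by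
  apply Ctx.cases (A := .v x)
  · exact Ctx.orI1 (Ctx.iffMpr (repl1 (top_iff Ctx.hyp0) B) (Ctx.hyp (by simp)))
  · exact Ctx.orI2 (Ctx.iffMpr (repl1 (bot_iff Ctx.hyp0) B) (Ctx.hyp (by simp)))

theorem fact_a (B : Form var par) (x : var) :
    Ctx [B] ((((Form.subst (sub1 x .bot) B).imp (.v x)).and
      (Form.subst (sub1 x .top) B)).fiff (.v x)) := by
  apply Ctx.iffI
  · apply Ctx.intro
    apply Ctx.cases (A := .v x)
    · exact Ctx.hyp0
    · have hBiff := repl1 (Γ := (Form.v x).neg ::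
        ((Form.subst (sub1 x .bot) B).imp (.v x)).and (Form.subst (sub1 x .top) B) :: [B])
        (bot_iff Ctx.hyp0) B
      have hB : Ctx ((Form.v x).neg ::
        ((Form.subst (sub1 x .bot) B).imp (.v x)).and (Form.subst (sub1 x .top) B) :: [B]) B :=
        Ctx.hyp (by simp)
      have ht : Ctx ((Form.v x).neg ::
        ((Form.subst (sub1 x .bot) B).imp (.v x)).and (Form.subst (sub1 x .top) B) :: [B])
          (((Form.subst (sub1 x .bot) B).imp (.v x)).and (Form.subst (sub1 x .top) B)) :=
        Ctx.hyp (by simp)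
      exact Ctx.negE Ctx.hyp0 (Ctx.mp ht.andE1 (Ctx.iffMpr hBiff hB))
  · apply Ctx.intro
    refine Ctx.andI (Ctx.intro ?_) ?_
    · exact Ctx.hyp (by simp)
    · exact Ctx.iffMpr (repl1 (top_iff Ctx.hyp0) B) (Ctx.hyp (by simp))

theorem fact_b (B : Form var par) (x : var) :
    Ctx ([] : List (Form var par))
      ((Form.subst (sub1 x (((Form.subst (sub1 x .bot) B).imp (.v x)).and
          (Form.subst (sub1 x .top) B))) B).fiff
        ((Form.subst (sub1 x .top) B).or (Form.subst (sub1 x .bot) B))) := by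
  set Bb := Form.subst (sub1 x (.bot : Form var par)) B with hBbdef
  set Bt := Form.subst (sub1 x (.top : Form var par)) B with hBtdef
  set t := (Bb.imp (.v x)).and Bt with htdef
  apply Ctx.iffI
  · apply Ctx.intro
    apply Ctx.cases (A := t)
    · exact Ctx.orI1 (Ctx.iffMp (repl2 (Ctx.iffTop Ctx.hyp0) B) (Ctx.hyp (by simp)))
    · exact Ctx.orI2 (Ctx.iffMp (repl2 (Ctx.iffBot Ctx.hyp0) B) (Ctx.hyp (by simp)))
  · apply Ctx.intro
    refine Ctx.orE Ctx.hyp0 ?_ ?_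
    · apply Ctx.cases (A := Bb.imp (.v x))
      · refine Ctx.iffMpr (repl2 (Ctx.iffTop ?_) B) (Ctx.hyp (by simp [hBtdef]))
        exact Ctx.andI Ctx.hyp0 (Ctx.hyp (by simp))
      · have hBb : Ctx ((Bb.imp (.v x)).neg :: Bt :: (Bt.or Bb) :: []) Bb :=
          notimp Ctx.hyp0
        have hnt : Ctx ((Bb.imp (.v x)).neg :: Bt :: (Bt.or Bb) :: []) t.neg := by
          apply Ctx.intro
          exact Ctx.negE (Ctx.hyp (A := (Bb.imp (.v x)).neg) (by simp))
            (Ctx.andE1 Ctx.hyp0)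
        exact Ctx.iffMpr (repl2 (Ctx.iffBot hnt) B) hBb
    · apply Ctx.cases (A := t)
      · exact Ctx.iffMpr (repl2 (Ctx.iffTop Ctx.hyp0) B) (Ctx.andE2 Ctx.hyp0)
      · exact Ctx.iffMpr (repl2 (Ctx.iffBot Ctx.hyp0) B) (Ctx.hyp (by simp [hBbdef]))

/-- Main elimination lemma: eliminating the variables in `L` from `B`. -/
theorem elim_main (L : List var) : ∀ B : Form var par, (∀ y ∈ fvars B, y ∈ L) →
    ∃ (E : Form var par) (θ : var → Form var par), E.varFree ∧
      Prv true ((Form.subst θ B).fiff E) ∧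
      ∀ x : var, Prv true (B.imp ((θ x).fiff (.v x))) := by
  induction L with
  | nil =>
      intro B h
      have hnil : fvars B = [] := List.eq_nil_iff_forall_not_mem.2 fun y hy => by
        simpa using h y hy
      refine ⟨B, Form.v, varFree_of_fvars_nil hnil, ?_, ?_⟩
      · rw [subst_id]
        exact (Ctx.iffRefl : Ctx ([] : List (Form var par)) _)
      · intro y
        exact (Ctx.iffRefl : Ctx [B] ((Form.v y).fiff (Form.v y)))
  | cons x L ih =>
      intro B h
      have hsub : ∀ y ∈ fvars ((Form.subst (sub1 x .top) B).or (Form.subst (sub1 x .bot) B)),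
          y ∈ L := by
        intro y hy
        rw [fvars, List.mem_append] at hy
        have key : ∀ C : Form var par, fvars C = [] →
            y ∈ fvars (Form.subst (sub1 x C) B) → y ∈ L := by
          intro C hC hy'
          obtain ⟨z, hz, hyz⟩ := mem_fvars_subst _ hy'
          by_cases hzx : z = x
          · subst hzx; rw [sub1_same, hC] at hyz; simp at hyz
          · rw [sub1_other _ hzx] at hyz
            have hyz' : y = z := by simpa [fvars] using hyz
            subst hyz'
            rcases List.mem_cons.1 (h y hz) with ha | ha
            · exact absurd ha hzx
            · exact ha
        rcases hy with hy | hy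
        · exact key Form.top rfl hy
        · exact key Form.bot rfl hy
      obtain ⟨E, σ, hE, hiff, hfix⟩ :=
        ih ((Form.subst (sub1 x .top) B).or (Form.subst (sub1 x .bot) B)) hsub
      refine ⟨E, fun y => Form.subst σ
        (sub1 x (((Form.subst (sub1 x .bot) B).imp (.v x)).and
          (Form.subst (sub1 x .top) B)) y), hE, ?_, ?_⟩
      · have hcomp : Form.subst (fun y => Form.subst σ
            (sub1 x (((Form.subst (sub1 x .bot) B).imp (.v x)).and
              (Form.subst (sub1 x .top) B)) y)) B
            = Form.subst σ (Form.subst (sub1 x (((Form.subst (sub1 x .bot) B).imp (.v x)).and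
              (Form.subst (sub1 x .top) B))) B) :=
          (subst_subst σ _ B).symm
        rw [hcomp]
        have h1 := fact_b B x
        have h2 : Prv true ((Form.subst σ (Form.subst (sub1 x (((Form.subst (sub1 x .bot) B).imp
            (.v x)).and (Form.subst (sub1 x .top) B))) B)).fiff
              (Form.subst σ ((Form.subst (sub1 x .top) B).or (Form.subst (sub1 x .bot) B)))) :=
          Prv.substPrv σ h1
        exact Ctx.iffTrans (Γ := ([] : List (Form var par))) h2 hiff
      · intro y
        show Ctx [B] _
        have hBB' : Ctx [B] ((Form.subst (sub1 x .top) B).or (Form.subst (sub1 x .bot) B)) :=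
          fact_c B x
        have hσfix : ∀ C, Ctx [(Form.subst (sub1 x .top) B).or (Form.subst (sub1 x .bot) B)]
            ((Form.subst σ C).fiff C) := fix_subst σ fun z => hfix z
        have s1 : Ctx [B] ((Form.subst σ (sub1 x (((Form.subst (sub1 x .bot) B).imp (.v x)).and
            (Form.subst (sub1 x .top) B)) y)).fiff
              (sub1 x (((Form.subst (sub1 x .bot) B).imp (.v x)).and
                (Form.subst (sub1 x .top) B)) y)) :=
          Ctx.mp (Ctx.ofPrv (hσfix _)) hBB'
        have s2 : Ctx [B] ((sub1 x (((Form.subst (sub1 x .bot) B).imp (.v x)).and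
            (Form.subst (sub1 x .top) B)) y).fiff (.v y)) := by
          by_cases hy : y = x
          · subst hy; rw [sub1_same]; exact fact_a B y
          · rw [sub1_other _ hy]; exact Ctx.iffRefl
        exact Ctx.iffTrans s1 s2

end PLaux

/-- In classical logic every formula is par-projective; moreover `U(A) → A` is projective. -/
theorem classical_all_par_projective {var par : Type} (A : Form var par) :
    (∃ (E : Form var par) (θ : var → Form var par), E.varFree ∧
        Prv true ((Form.subst θ A).fiff E) ∧
        ∀ x : var, Prv true (A.imp ((θ x).fiff (Form.v x)))) ∧
    (∀ U : Form var par, IsUPI true A U →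
      ∃ θ : var → Form var par, Prv true (Form.subst θ (U.imp A)) ∧
        ∀ x : var, Prv true ((U.imp A).imp ((θ x).fiff (Form.v x)))) := by
  constructor
  · obtain ⟨E, θ, hE, hiff, hfix⟩ := PLaux.elim_main (PLaux.fvars A) A (fun _ hy => hy)
    exact ⟨E, θ, hE, hiff, hfix⟩
  · intro U hU
    obtain ⟨E, θ, hE, hiff, hfix⟩ :=
      PLaux.elim_main (PLaux.fvars (U.imp A)) (U.imp A) (fun _ hy => hy)
    have hfixB : ∀ C, PLaux.Ctx [U.imp A] ((Form.subst θ C).fiff C) :=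
      PLaux.fix_subst θ fun z => hfix z
    have hBE : Prv true ((U.imp A).imp E) := by
      show PLaux.Ctx [U.imp A] E
      exact PLaux.Ctx.iffMp (PLaux.Ctx.ofPrv hiff)
        (PLaux.Ctx.iffMpr (hfixB (U.imp A)) PLaux.Ctx.hyp0)
    have hAE : Prv true (A.imp E) := by
      show PLaux.Ctx [A] E
      exact PLaux.Ctx.mp (PLaux.Ctx.ofPrv hBE) (Prv.k : PLaux.Ctx [A] (U.imp A))
    have hUE : Prv true (U.imp E) := hU.2.2 E hE hAE
    have esub : Form.subst θ (U.imp A) = U.imp (Form.subst θ A) := by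
      rw [show Form.subst θ (U.imp A) = (Form.subst θ U).imp (Form.subst θ A) from rfl,
        PLaux.subst_varFree θ hU.1]
    refine ⟨θ, ?_, hfix⟩
    rw [esub]
    show PLaux.Ctx [U] (Form.subst θ A)
    have h2 : Prv true (E.imp (U.imp (Form.subst θ A))) := by
      have h3 := PLaux.Ctx.iff2 (Γ := ([] : List (Form var par))) hiff
      rwa [esub] at h3
    exact PLaux.Ctx.mp (PLaux.Ctx.mp (PLaux.Ctx.ofPrv h2) (hUE : PLaux.Ctx [U] E))
      PLaux.Ctx.hyp0
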